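/- Let f, g: ℝ → ℝ with f convex and differentiable, g concave and differentiable, and L = f + g. Fix ỹ > 0 and latent weights w_r > 0 with ∑_r w_r = 1. Then for any ŷ_r ≥ 0 with ŷ = ∑_r ŷ_r, Q := ∑_r w_r·f(ŷ_r/w_r) + g(ỹ) + g'(ỹ)·(ŷ − ỹ) satisfies Q ≥ L(ŷ), and when ŷ_r = w_r·ỹ for all r (so ŷ = ỹ), Q = L(ỹ). -/
import Mathlib

lemma tangent_le_aux (h : ℝ → ℝ) (hc : ConvexOn ℝ Set.univ h) (hd : Differentiable ℝ h)
    (Y x : ℝ) : h Y + deriv h Y * (x - Y) ≤ h x := by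
  rcases lt_trichotomy x Y with hxy | rfl | hxy
  · have := hc.slope_le_deriv (Set.mem_univ x) (Set.mem_univ Y) hxy (hd Y)
    rw [slope_def_field, div_le_iff₀ (by linarith)] at this
    nlinarith
  · simp
  · have := hc.deriv_le_slope (Set.mem_univ Y) (Set.mem_univ x) hxy (hd Y)
    rw [slope_def_field, le_div_iff₀ (by linarith)] at this
    nlinarith

/-- One-dimensional surrogate construction: Jensen on the convex part and a
tangent line on the concave part give an upper bound that is tight at the
current point. -/
theorem stmt_16 (f g : ℝ → ℝ)
    (hf : ConvexOn ℝ Set.univ f) (hfd : Differentiable ℝ f)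
    (hg : ConcaveOn ℝ Set.univ g) (hgd : Differentiable ℝ g)
    (Y : ℝ) (hY : 0 < Y)
    (ι : Type) (s : Finset ι) (w : ι → ℝ)
    (hw : ∀ r ∈ s, 0 < w r) (hw1 : (∑ r ∈ s, w r) = 1)
    (yh : ι → ℝ) (hyh : ∀ r ∈ s, 0 ≤ yh r) :
    (f (∑ r ∈ s, yh r) + g (∑ r ∈ s, yh r) ≤
      (∑ r ∈ s, w r * f (yh r / w r)) + g Y + deriv g Y * ((∑ r ∈ s, yh r) - Y)) ∧
    ((∀ r ∈ s, yh r = w r * Y) →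
      (∑ r ∈ s, w r * f (yh r / w r)) + g Y + deriv g Y * ((∑ r ∈ s, yh r) - Y) =
        f Y + g Y) := by
  constructor
  · have hjen := hf.map_sum_le (t := s) (p := fun r => yh r / w r)
      (fun r hr => (hw r hr).le) hw1 (fun r _ => Set.mem_univ _)
    have hsum : ∑ r ∈ s, w r • (yh r / w r) = ∑ r ∈ s, yh r := by
      apply Finset.sum_congr rfl
      intro r hr
      rw [smul_eq_mul, mul_div_cancel₀ _ (hw r hr).ne']
    rw [hsum] at hjen
    have hneg : ConvexOn ℝ Set.univ (-g) := hg.neg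
    have htan := tangent_le_aux (-g) hneg hgd.neg Y (∑ r ∈ s, yh r)
    have hdneg : deriv (-g) Y = -deriv g Y := deriv.neg
    simp only [Pi.neg_apply, hdneg] at htan
    simp only [smul_eq_mul] at hjen
    nlinarith
  · intro hall
    have h1 : ∀ r ∈ s, w r * f (yh r / w r) = w r * f Y := by
      intro r hr
      rw [hall r hr, mul_comm (w r) Y, mul_div_assoc, div_self (hw r hr).ne', mul_one]
    have h2 : ∑ r ∈ s, yh r = Y := by
      rw [Finset.sum_congr rfl hall, ← Finset.sum_mul, hw1, one_mul]
    rw [Finset.sum_congr rfl h1, ← Finset.sum_mul, hw1, one_mul, h2, sub_self, mul_zero,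
      add_zero]
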